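/- Let α, C, T > 0 and let ψ : [0,T] → ℝ be continuous and nonnegative. If ψ(t) ≤ ψ(0) + (C/Γ(α)) ∫₀ᵗ (t−s)^{α−1} ψ(s) ds for all t ∈ [0,T], then ψ(t) ≤ ψ(0) · E_{α,1}(C t^α) for all t ∈ [0,T], where E_{α,1}(z) = Σ_{k≥0} z^k/Γ(αk+1) is the Mittag-Leffler function. -/
import Mathlib


open MeasureTheory



lemma wsg_beta_eval {u v t : ℝ} (hu : 0 < u) (hv : 0 < v) (ht : 0 < t) :
    ∫ s in (0:ℝ)..t, (t - s) ^ (v - 1) * s ^ (u - 1) =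
      Real.Gamma u * Real.Gamma v / Real.Gamma (u + v) * t ^ (u + v - 1) := by
  have hcast : ((u:ℂ) + v) = ((u + v : ℝ) : ℂ) := by push_cast; ring
  have hne : Complex.Gamma ((u : ℂ) + v) ≠ 0 := by
    rw [hcast, Complex.Gamma_ofReal]
    exact_mod_cast (Real.Gamma_pos_of_pos (by linarith)).ne'
  have hmul := Complex.Gamma_mul_Gamma_eq_betaIntegral (s := (u:ℂ)) (t := (v:ℂ))
    (by simpa using hu) (by simpa using hv)
  have hbeta : Complex.betaIntegral u v =
      ((Real.Gamma u * Real.Gamma v / Real.Gamma (u + v) : ℝ) : ℂ) := by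
    rw [show (((Real.Gamma u * Real.Gamma v / Real.Gamma (u + v) : ℝ)) : ℂ)
        = Complex.Gamma u * Complex.Gamma v / Complex.Gamma ((u:ℂ) + v) by
      rw [hcast, Complex.Gamma_ofReal, Complex.Gamma_ofReal, Complex.Gamma_ofReal]; push_cast; ring,
      eq_div_iff hne]
    linear_combination -hmul
  have hscaled := Complex.betaIntegral_scaled (u : ℂ) (v : ℂ) ht
  have hLHS : ((∫ s in (0:ℝ)..t, (t - s) ^ (v - 1) * s ^ (u - 1) : ℝ) : ℂ)
      = ∫ x in (0:ℝ)..t, (x : ℂ) ^ ((u:ℂ) - 1) * ((t : ℂ) - x) ^ ((v:ℂ) - 1) := by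
    rw [← intervalIntegral.integral_ofReal]
    refine intervalIntegral.integral_congr fun x hx => ?_
    rw [Set.uIcc_of_le ht.le] at hx
    rw [Complex.ofReal_mul, Complex.ofReal_cpow (sub_nonneg.2 hx.2) (v - 1),
      Complex.ofReal_cpow hx.1 (u - 1)]
    push_cast
    ring
  have hRHS : ((t : ℂ)) ^ ((u:ℂ) + v - 1) = ((t ^ (u + v - 1) : ℝ) : ℂ) := by
    rw [Complex.ofReal_cpow ht.le (u + v - 1)]
    push_cast
    ring_nf
  have : ((∫ s in (0:ℝ)..t, (t - s) ^ (v - 1) * s ^ (u - 1) : ℝ) : ℂ)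
      = (((Real.Gamma u * Real.Gamma v / Real.Gamma (u + v)) * t ^ (u + v - 1) : ℝ) : ℂ) := by
    rw [hLHS, hscaled, hbeta, hRHS]
    push_cast
    ring
  exact_mod_cast this


lemma wsg_integrable {α t : ℝ} (hα : 0 < α) (ht : 0 ≤ t) {g : ℝ → ℝ}
    (hg : ContinuousOn g (Set.uIcc 0 t)) :
    IntervalIntegrable (fun s => (t - s) ^ (α - 1) * g s) volume 0 t := by
  have h1 : IntervalIntegrable (fun s : ℝ => s ^ (α - 1)) volume 0 t :=
    intervalIntegral.intervalIntegrable_rpow' (by linarith)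
  have h2 := (h1.comp_sub_left t).symm
  simp only [sub_zero, sub_self] at h2
  exact h2.mul_continuousOn hg

lemma wsg_cont_rpow {β : ℝ} (hβ : 0 ≤ β) : Continuous (fun s : ℝ => s ^ β) := by
  rw [continuous_iff_continuousAt]
  exact fun s => Real.continuousAt_rpow_const s β (Or.inr hβ)

lemma wsg_summable {α : ℝ} (hα : 0 < α) {x : ℝ} (hx : 0 ≤ x) :
    Summable (fun k : ℕ => x ^ k / Real.Gamma (α * k + 1)) := by
  obtain ⟨N₀, hN₀⟩ := exists_nat_ge ((2 * x + 2) ^ α⁻¹)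
  set N : ℕ := max N₀ 2 with hNdef
  have hN2 : (2:ℕ) ≤ N := le_max_right _ _
  have hN2' : (2:ℝ) ≤ (N:ℝ) := by exact_mod_cast hN2
  have hNα : 2 * x + 2 ≤ (N:ℝ) ^ α := by
    have h1 : ((2 * x + 2) ^ α⁻¹ : ℝ) ≤ (N:ℝ) :=
      hN₀.trans (by exact_mod_cast Nat.cast_le.2 (le_max_left _ _))
    calc 2 * x + 2 = ((2 * x + 2) ^ α⁻¹) ^ α := by
          rw [Real.rpow_inv_rpow (by linarith) hα.ne']
      _ ≤ (N:ℝ) ^ α := Real.rpow_le_rpow (Real.rpow_nonneg (by linarith) _) h1 hα.le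
  have key : ∀ k : ℕ, (N:ℝ) + 1 ≤ α * k →
      x ^ k / Real.Gamma (α * k + 1) ≤ (N:ℝ) ^ (N + 1) * (1/2) ^ k := by
    intro k hk
    set n : ℕ := ⌈α * (k:ℝ)⌉₊ - 1 with hn
    have hceil_pos : 1 ≤ ⌈α * (k:ℝ)⌉₊ := by
      rw [Nat.one_le_ceil_iff]; nlinarith [hN2']
    have hn1 : (n:ℝ) + 1 = (⌈α * (k:ℝ)⌉₊ : ℝ) := by
      rw [hn]; push_cast [Nat.cast_sub hceil_pos]; ring
    have hnk : (n:ℝ) + 1 ≤ α * k + 1 := by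
      rw [hn1]
      have := Nat.ceil_lt_add_one (by positivity : (0:ℝ) ≤ α * k)
      linarith
    have hNn : (N:ℝ) ≤ (n:ℝ) := by
      have h1 := Nat.le_ceil (α * (k:ℝ))
      have h2 : α * k ≤ (n:ℝ) + 1 := by rw [hn1]; exact h1
      linarith
    have hNnnat : N ≤ n := by exact_mod_cast hNn
    have hG1 : (Nat.factorial n : ℝ) ≤ Real.Gamma (α * k + 1) := by
      rw [← Real.Gamma_nat_eq_factorial]
      have hmono := Real.Gamma_strictMonoOn_Ici.monotoneOn (a := ((n:ℝ)+1)) (b := α * k + 1)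
      push_cast
      refine hmono ?_ ?_ hnk
      · simp only [Set.mem_Ici]; linarith
      · simp only [Set.mem_Ici]; nlinarith [hN2']
    have hG2 : ((N:ℝ)) ^ n / (N:ℝ) ^ N ≤ (Nat.factorial n : ℝ) := by
      have hfac := Nat.factorial_mul_pow_sub_le_factorial hNnnat
      have h1 : ((N:ℝ)) ^ (n - N) ≤ (Nat.factorial n : ℝ) := by
        calc ((N:ℝ)) ^ (n - N) = ((N ^ (n - N) : ℕ) : ℝ) := by push_cast; ring
          _ ≤ ((Nat.factorial N * N ^ (n - N) : ℕ) : ℝ) := by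
              exact_mod_cast Nat.le_mul_of_pos_left _ (Nat.factorial_pos N)
          _ ≤ (Nat.factorial n : ℝ) := by exact_mod_cast hfac
      have hpow : ((N:ℝ)) ^ n / (N:ℝ) ^ N = ((N:ℝ)) ^ (n - N) := by
        rw [div_eq_iff (by positivity : ((N:ℝ) ^ N) ≠ 0), ← pow_add]
        congr 1
        omega
      rw [hpow]; exact h1
    have hNn_rpow : ((N:ℝ) ^ α) ^ k / (N:ℝ) ≤ ((N:ℝ)) ^ n := by
      have h1 : ((N:ℝ) ^ α) ^ k = (N:ℝ) ^ (α * k) := by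
        rw [← Real.rpow_natCast ((N:ℝ) ^ α) k, ← Real.rpow_mul (by positivity)]
      have h2 : ((N:ℝ)) ^ n = (N:ℝ) ^ ((n:ℕ):ℝ) := by
        rw [Real.rpow_natCast]
      have hub : α * k ≤ (n:ℝ) + 1 := by rw [hn1]; exact Nat.le_ceil _
      have h3 : (N:ℝ) ^ (α * k) ≤ (N:ℝ) ^ (((n:ℕ):ℝ) + 1) :=
        Real.rpow_le_rpow_of_exponent_le (by linarith) (by exact_mod_cast hub)
      rw [h1, h2, div_le_iff₀ (by positivity)]
      calc (N:ℝ) ^ (α * k) ≤ (N:ℝ) ^ (((n:ℕ):ℝ) + 1) := h3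
        _ = (N:ℝ) ^ ((n:ℕ):ℝ) * (N:ℝ) := by
            rw [Real.rpow_add (by positivity), Real.rpow_one]
    have hGpos : 0 < Real.Gamma (α * k + 1) := Real.Gamma_pos_of_pos (by positivity)
    have hlow : ((N:ℝ) ^ α) ^ k / (N:ℝ) ^ (N + 1) ≤ Real.Gamma (α * k + 1) := by
      calc ((N:ℝ) ^ α) ^ k / (N:ℝ) ^ (N + 1) = (((N:ℝ) ^ α) ^ k / (N:ℝ)) / (N:ℝ) ^ N := by
            rw [pow_succ]; ring
        _ ≤ ((N:ℝ)) ^ n / (N:ℝ) ^ N :=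
            div_le_div_of_nonneg_right hNn_rpow (by positivity)
        _ ≤ (Nat.factorial n : ℝ) := hG2
        _ ≤ _ := hG1
    rw [div_le_iff₀ hGpos]
    calc x ^ k ≤ ((N:ℝ) ^ α / 2) ^ k := pow_le_pow_left₀ hx (by linarith) k
      _ = (N:ℝ) ^ (N + 1) * (1/2) ^ k * (((N:ℝ) ^ α) ^ k / (N:ℝ) ^ (N + 1)) := by
          rw [div_pow, div_pow]
          field_simp
          ring
      _ ≤ (N:ℝ) ^ (N + 1) * (1/2) ^ k * Real.Gamma (α * k + 1) :=
          mul_le_mul_of_nonneg_left hlow (by positivity)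
  obtain ⟨K, hK⟩ := exists_nat_ge (((N:ℝ) + 1) / α)
  have hKk : ∀ k : ℕ, (N:ℝ) + 1 ≤ α * ((k:ℝ) + K) := by
    intro k
    have h1 : ((N:ℝ) + 1) / α ≤ (k:ℝ) + K := by
      refine hK.trans ?_
      have : (0:ℝ) ≤ (k:ℝ) := Nat.cast_nonneg k
      linarith
    calc (N:ℝ) + 1 = α * (((N:ℝ) + 1) / α) := by field_simp
      _ ≤ α * ((k:ℝ) + K) := mul_le_mul_of_nonneg_left h1 hα.le
  have hsum : Summable (fun k : ℕ => x ^ (k + K) / Real.Gamma (α * ((k + K : ℕ):ℝ) + 1)) := by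
    refine Summable.of_nonneg_of_le (fun k => by positivity) (fun k => ?_)
      (((summable_geometric_of_lt_one (r := 1/2) (by norm_num) (by norm_num))).mul_left ((N:ℝ) ^ (N + 1)))
    calc x ^ (k + K) / Real.Gamma (α * ((k + K : ℕ):ℝ) + 1)
        ≤ (N:ℝ) ^ (N + 1) * (1/2) ^ (k + K) := by
          have := key (k + K) (by push_cast; exact hKk k)
          exact this
      _ ≤ (N:ℝ) ^ (N + 1) * ((1:ℝ)/2) ^ k :=
          mul_le_mul_of_nonneg_left
            (pow_le_pow_of_le_one (by norm_num) (by norm_num) (Nat.le_add_right k K))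
            (by positivity)
  exact (summable_nat_add_iff K).mp hsum

-- the induction step, 0 < t case, as standalone lemma
lemma wsg_step (α C T M : ℝ) (hα : 0 < α) (hC : 0 < C) (hT : 0 < T)
    (ψ : ℝ → ℝ) (hψc : ContinuousOn ψ (Set.Icc 0 T))
    (h : ∀ t ∈ Set.Icc (0:ℝ) T,
      ψ t ≤ ψ 0 + (C / Real.Gamma α) * ∫ s in (0:ℝ)..t, (t - s) ^ (α - 1) * ψ s)
    (n : ℕ)
    (ih : ∀ s ∈ Set.Icc (0:ℝ) T,
      ψ s ≤ ψ 0 * (∑ k ∈ Finset.range n, C ^ k * s ^ (α * k) / Real.Gamma (α * k + 1))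
        + M * (C ^ n * s ^ (α * n) / Real.Gamma (α * n + 1)))
    (t : ℝ) (htpos : 0 < t) (htT : t ≤ T) :
    ψ t ≤ ψ 0 * (∑ k ∈ Finset.range (n+1), C ^ k * t ^ (α * k) / Real.Gamma (α * k + 1))
        + M * (C ^ (n+1) * t ^ (α * (n+1)) / Real.Gamma (α * (n+1) + 1)) := by
  have ht0 : (0:ℝ) ≤ t := htpos.le
  have hΓα : 0 < Real.Gamma α := Real.Gamma_pos_of_pos hα
  have hΓk : ∀ k : ℕ, 0 < Real.Gamma (α * k + 1) := fun k =>
    Real.Gamma_pos_of_pos (by positivity)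
  set g : ℝ → ℝ := fun s =>
    ψ 0 * (∑ k ∈ Finset.range n, C ^ k * s ^ (α * k) / Real.Gamma (α * k + 1))
      + M * (C ^ n * s ^ (α * n) / Real.Gamma (α * n + 1)) with hg
  have hgc : Continuous g := by
    refine Continuous.add (continuous_const.mul ?_) (continuous_const.mul ?_)
    · exact continuous_finset_sum _ fun k _ =>
        ((continuous_const.mul (wsg_cont_rpow (by positivity : (0:ℝ) ≤ α * k))).div_const _)
    · exact (continuous_const.mul (wsg_cont_rpow (by positivity : (0:ℝ) ≤ α * n))).div_const _
  have hint1 : IntervalIntegrable (fun s => (t - s) ^ (α - 1) * ψ s) volume 0 t := by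
    refine wsg_integrable hα ht0 (hψc.mono ?_)
    rw [Set.uIcc_of_le ht0]
    exact Set.Icc_subset_Icc le_rfl htT
  have hint2 : IntervalIntegrable (fun s => (t - s) ^ (α - 1) * g s) volume 0 t :=
    wsg_integrable hα ht0 hgc.continuousOn
  have hmono : (∫ s in (0:ℝ)..t, (t - s) ^ (α - 1) * ψ s)
      ≤ ∫ s in (0:ℝ)..t, (t - s) ^ (α - 1) * g s := by
    refine intervalIntegral.integral_mono_on ht0 hint1 hint2 fun s hs => ?_
    exact mul_le_mul_of_nonneg_left (ih s ⟨hs.1, hs.2.trans htT⟩)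
      (Real.rpow_nonneg (sub_nonneg.2 hs.2) _)
  have hker : ∀ k : ℕ, IntervalIntegrable (fun s => (t - s) ^ (α - 1) * s ^ (α * k)) volume 0 t :=
    fun k => wsg_integrable hα ht0 (wsg_cont_rpow (by positivity)).continuousOn
  have hI : ∀ k : ℕ, (∫ s in (0:ℝ)..t, (t - s) ^ (α - 1) * s ^ (α * k)) =
      Real.Gamma (α * k + 1) * Real.Gamma α / Real.Gamma (α * k + α + 1) * t ^ (α * k + α) := by
    intro k
    have heval := wsg_beta_eval (u := α * k + 1) (v := α) (by positivity) hα htpos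
    rw [show α * (k:ℝ) + 1 - 1 = α * k by ring, show α * (k:ℝ) + 1 + α - 1 = α * k + α by ring,
      show α * (k:ℝ) + 1 + α = α * k + α + 1 by ring] at heval
    exact heval
  have hpt : ∀ s : ℝ, (t - s) ^ (α - 1) * g s
      = (∑ k ∈ Finset.range n,
          (ψ 0 * (C ^ k / Real.Gamma (α * k + 1))) * ((t - s) ^ (α - 1) * s ^ (α * k)))
        + (M * (C ^ n / Real.Gamma (α * n + 1))) * ((t - s) ^ (α - 1) * s ^ (α * n)) := by
    intro s
    rw [hg]
    simp only [Finset.mul_sum, mul_add]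
    congr 1
    · exact Finset.sum_congr rfl fun k _ => by ring
    · ring
  have hexp : (∫ s in (0:ℝ)..t, (t - s) ^ (α - 1) * g s)
      = (∑ k ∈ Finset.range n,
          (ψ 0 * (C ^ k / Real.Gamma (α * k + 1)))
            * (Real.Gamma (α * k + 1) * Real.Gamma α / Real.Gamma (α * k + α + 1)
               * t ^ (α * k + α)))
        + (M * (C ^ n / Real.Gamma (α * n + 1)))
            * (Real.Gamma (α * n + 1) * Real.Gamma α / Real.Gamma (α * n + α + 1)
               * t ^ (α * n + α)) := by
    rw [intervalIntegral.integral_congr (g :=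
        fun s => (∑ k ∈ Finset.range n,
          (ψ 0 * (C ^ k / Real.Gamma (α * k + 1))) * ((t - s) ^ (α - 1) * s ^ (α * k)))
        + (M * (C ^ n / Real.Gamma (α * n + 1))) * ((t - s) ^ (α - 1) * s ^ (α * n)))
      (fun s _ => hpt s)]
    have hsumint : IntervalIntegrable (fun x => ∑ k ∈ Finset.range n,
        (ψ 0 * (C ^ k / Real.Gamma (α * k + 1))) * ((t - x) ^ (α - 1) * x ^ (α * k)))
        volume 0 t := by
      have hs := IntervalIntegrable.sum (μ := volume) (a := 0) (b := t) (Finset.range n)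
        (f := fun (k : ℕ) (s : ℝ) =>
          (ψ 0 * (C ^ k / Real.Gamma (α * k + 1))) * ((t - s) ^ (α - 1) * s ^ (α * k)))
        (fun k _ => (hker k).const_mul _)
      have heq : (∑ k ∈ Finset.range n, fun s : ℝ =>
          (ψ 0 * (C ^ k / Real.Gamma (α * k + 1))) * ((t - s) ^ (α - 1) * s ^ (α * k)))
          = fun x : ℝ => ∑ k ∈ Finset.range n,
          (ψ 0 * (C ^ k / Real.Gamma (α * k + 1))) * ((t - x) ^ (α - 1) * x ^ (α * k)) := by
        ext x
        simp
      rw [heq] at hs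
      exact hs
    rw [intervalIntegral.integral_add hsumint ((hker n).const_mul _),
      intervalIntegral.integral_finset_sum (fun k _ => (hker k).const_mul _)]
    simp only [intervalIntegral.integral_const_mul, hI]
  calc ψ t ≤ ψ 0 + (C / Real.Gamma α) * ∫ s in (0:ℝ)..t, (t - s) ^ (α - 1) * ψ s :=
        h t ⟨ht0, htT⟩
    _ ≤ ψ 0 + (C / Real.Gamma α) * ∫ s in (0:ℝ)..t, (t - s) ^ (α - 1) * g s := by
        have := mul_le_mul_of_nonneg_left hmono (by positivity : (0:ℝ) ≤ C / Real.Gamma α)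
        linarith
    _ = ψ 0 + ((∑ k ∈ Finset.range n,
          ψ 0 * (C ^ (k+1) * t ^ (α * ((k:ℝ)+1)) / Real.Gamma (α * ((k:ℝ)+1) + 1)))
        + M * (C ^ (n+1) * t ^ (α * ((n:ℝ)+1)) / Real.Gamma (α * ((n:ℝ)+1) + 1))) := by
        rw [hexp, mul_add, Finset.mul_sum]
        congr 1
        congr 1
        · refine Finset.sum_congr rfl fun k _ => ?_
          rw [show α * ((k:ℝ)+1) = α * k + α by ring]
          have h1 := (hΓk k).ne'
          have h2 : Real.Gamma (α * k + α + 1) ≠ 0 :=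
            (Real.Gamma_pos_of_pos (by positivity)).ne'
          field_simp
          ring
        · rw [show α * ((n:ℝ)+1) = α * n + α by ring]
          have h1 := (hΓk n).ne'
          have h2 : Real.Gamma (α * n + α + 1) ≠ 0 :=
            (Real.Gamma_pos_of_pos (by positivity)).ne'
          field_simp
          ring
    _ = _ := by
        rw [Finset.sum_range_succ' (fun k => C ^ k * t ^ (α * k) / Real.Gamma (α * k + 1)) n]
        push_cast
        simp only [mul_zero, Real.rpow_zero, pow_zero, Real.Gamma_one, zero_add]
        rw [mul_add (ψ 0), Finset.mul_sum]
        norm_num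
        ring

/-- Two-parameter Mittag-Leffler function `E_{α,1}`. -/
noncomputable def mittagLeffler (α z : ℝ) : ℝ :=
  ∑' k : ℕ, z ^ k / Real.Gamma (α * k + 1)

theorem weakly_singular_gronwall (α C T : ℝ) (hα : 0 < α) (hC : 0 < C) (hT : 0 < T)
    (ψ : ℝ → ℝ) (hψc : ContinuousOn ψ (Set.Icc 0 T))
    (hψ0 : ∀ t ∈ Set.Icc (0:ℝ) T, 0 ≤ ψ t)
    (h : ∀ t ∈ Set.Icc (0:ℝ) T,
      ψ t ≤ ψ 0 + (C / Real.Gamma α) * ∫ s in (0:ℝ)..t, (t - s) ^ (α - 1) * ψ s) :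
    ∀ t ∈ Set.Icc (0:ℝ) T, ψ t ≤ ψ 0 * mittagLeffler α (C * t ^ α) := by
  obtain ⟨z, hzmem, hzmax⟩ := isCompact_Icc.exists_isMaxOn (Set.nonempty_Icc.2 hT.le) hψc
  set M : ℝ := ψ z with hM
  have key : ∀ n : ℕ, ∀ t ∈ Set.Icc (0:ℝ) T,
      ψ t ≤ ψ 0 * (∑ k ∈ Finset.range n, C ^ k * t ^ (α * k) / Real.Gamma (α * k + 1))
        + M * (C ^ n * t ^ (α * n) / Real.Gamma (α * n + 1)) := by
    intro n
    induction n with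
    | zero =>
      intro t ht
      simp only [Finset.range_zero, Finset.sum_empty, mul_zero, zero_add, pow_zero,
        Nat.cast_zero, mul_zero, Real.rpow_zero, Real.Gamma_one]
      simpa using hzmax ht
    | succ n ih =>
      intro t ht
      obtain ⟨ht0, htT⟩ := ht
      rcases eq_or_lt_of_le ht0 with rfl | htpos
      · have hsum : (∑ k ∈ Finset.range (n+1),
            C ^ k * (0:ℝ) ^ (α * k) / Real.Gamma (α * k + 1)) = 1 := by
          rw [Finset.sum_eq_single_of_mem 0 (Finset.mem_range.2 n.succ_pos)]
          · norm_num [Real.Gamma_one]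
          · intro k _ hk
            have hk' : (0:ℝ) < (k:ℝ) := by exact_mod_cast Nat.pos_of_ne_zero hk
            rw [Real.zero_rpow (by positivity : α * (k:ℝ) ≠ 0)]
            simp
        rw [hsum]
        rw [Real.zero_rpow (by positivity : α * ((n+1 : ℕ):ℝ) ≠ 0)]
        simp
      · have := wsg_step α C T M hα hC hT ψ hψc h n ih t htpos htT
        push_cast
        push_cast at this
        exact this
  intro t ht
  have ht0 : 0 ≤ t := ht.1
  set x : ℝ := C * t ^ α with hx
  have hx0 : 0 ≤ x := by positivity
  have hterm : ∀ k : ℕ, C ^ k * t ^ (α * k) / Real.Gamma (α * k + 1)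
      = x ^ k / Real.Gamma (α * k + 1) := by
    intro k
    rw [hx, mul_pow, ← Real.rpow_natCast (t ^ α) k, ← Real.rpow_mul ht0]
  have hsum := wsg_summable hα hx0
  have T1 : Filter.Tendsto (fun n => ∑ k ∈ Finset.range n, x ^ k / Real.Gamma (α * k + 1))
      Filter.atTop (nhds (mittagLeffler α x)) := hsum.hasSum.tendsto_sum_nat
  have T2 : Filter.Tendsto (fun n : ℕ => x ^ n / Real.Gamma (α * n + 1))
      Filter.atTop (nhds 0) := hsum.tendsto_atTop_zero
  have Tlim : Filter.Tendsto
      (fun n : ℕ => ψ 0 * (∑ k ∈ Finset.range n, x ^ k / Real.Gamma (α * k + 1))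
        + M * (x ^ n / Real.Gamma (α * n + 1)))
      Filter.atTop (nhds (ψ 0 * mittagLeffler α x + M * 0)) :=
    (T1.const_mul (ψ 0)).add (T2.const_mul M)
  rw [mul_zero, add_zero] at Tlim
  refine ge_of_tendsto' Tlim fun n => ?_
  have hk := key n t ht
  simpa only [hterm] using hk
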